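/- Let G = (S, C, R) be a reaction network with a set of catalysts E ⊆ S and let G* be the reduction of G by removal of E. If G is consistent, then G* is consistent. Conversely, if G* is consistent and the subnetwork G_E implied by E is conservative, then G is consistent. -/

import Mathlib

/-- A reaction network: a finite set of species, a finite set of complexes
(nonnegative vectors supported on the species), and a finite set of reactions
(a digraph on the complexes with no self-loops), such that every complex takes
part in some reaction and every species is part of some complex. -/
structure RN (ι : Type) where
  species : Finset ι
  complexes : Finset (ι → ℝ)
  reactions : Finset ((ι → ℝ) × (ι → ℝ))
  complexes_nonneg : ∀ y ∈ complexes, ∀ i, 0 ≤ y i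
  complexes_supp : ∀ y ∈ complexes, ∀ i, y i ≠ 0 → i ∈ species
  react_mem_fst : ∀ r ∈ reactions, r.1 ∈ complexes
  react_mem_snd : ∀ r ∈ reactions, r.2 ∈ complexes
  no_loops : ∀ r ∈ reactions, r.1 ≠ r.2
  complexes_used : ∀ y ∈ complexes, ∃ r ∈ reactions, r.1 = y ∨ r.2 = y
  species_used : ∀ i ∈ species, ∃ y ∈ complexes, y i ≠ 0

namespace RN

variable {ι : Type}

/-- A siphon: a nonempty set of species such that every reaction having a
product species in it also has a reactant species in it. -/
def IsSiphon (G : RN ι) (T : Set ι) : Prop :=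
  T.Nonempty ∧ T ⊆ ↑G.species ∧
    ∀ r ∈ G.reactions, (∃ i ∈ T, 0 < r.2 i) → ∃ i ∈ T, 0 < r.1 i

/-- A minimal siphon: a siphon not properly containing any other siphon. -/
def MinimalSiphon (G : RN ι) (T : Set ι) : Prop :=
  G.IsSiphon T ∧ ∀ T' : Set ι, G.IsSiphon T' → T' ⊆ T → T' = T

/-- A nonempty set of species is drainable if some finite sequence of reactions
(with repetitions allowed) strictly decreases every one of its coordinates. -/
def Drainable (G : RN ι) (T : Set ι) : Prop :=
  T.Nonempty ∧ T ⊆ ↑G.species ∧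
    ∃ L : List ((ι → ℝ) × (ι → ℝ)), (∀ r ∈ L, r ∈ G.reactions) ∧
      ∀ i ∈ T, (L.map (fun r => r.2 i - r.1 i)).sum < 0

/-- A nonempty set of species is self-replicable if some finite sequence of
reactions (with repetitions allowed) strictly increases every one of its
coordinates. -/
def SelfReplicable (G : RN ι) (T : Set ι) : Prop :=
  T.Nonempty ∧ T ⊆ ↑G.species ∧
    ∃ L : List ((ι → ℝ) × (ι → ℝ)), (∀ r ∈ L, r ∈ G.reactions) ∧
      ∀ i ∈ T, 0 < (L.map (fun r => r.2 i - r.1 i)).sum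

/-- A P-semiflow: a nonzero nonnegative vector supported on the species with
ωᵀN = 0, i.e. ω · (y' - y) = 0 for every reaction y → y'. -/
def IsPSemiflow (G : RN ι) (ω : ι → ℝ) : Prop :=
  (∀ i, 0 ≤ ω i) ∧ (∀ i, ω i ≠ 0 → i ∈ G.species) ∧ ω ≠ 0 ∧
    ∀ r ∈ G.reactions, ∑ i ∈ G.species, ω i * (r.2 i - r.1 i) = 0

/-- The siphon/P-semiflow property: every siphon contains the support of a
P-semiflow. -/
def SiphonPSemiflowProperty (G : RN ι) : Prop :=
  ∀ T : Set ι, G.IsSiphon T → ∃ ω : ι → ℝ, G.IsPSemiflow ω ∧ {i | 0 < ω i} ⊆ T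

/-- Consistency: there is a strictly positive T-semiflow, i.e. strictly
positive reaction weights v with N v = 0. -/
def Consistent (G : RN ι) : Prop :=
  ∃ v : ((ι → ℝ) × (ι → ℝ)) → ℝ, (∀ r ∈ G.reactions, 0 < v r) ∧
    ∀ i : ι, ∑ r ∈ G.reactions, v r * (r.2 i - r.1 i) = 0

/-- Conservativity: there is a strictly positive conservation law ω ≫ 0 with
ωᵀN = 0. -/
def Conservative (G : RN ι) : Prop :=
  ∃ ω : ι → ℝ, (∀ i ∈ G.species, 0 < ω i) ∧
    ∀ r ∈ G.reactions, ∑ i ∈ G.species, ω i * (r.2 i - r.1 i) = 0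

/-- A directed reaction path from `y` to `y'` all of whose non-endpoint
complexes lie in the set `A`. -/
def PathThrough (G : RN ι) (A : Set (ι → ℝ)) (y y' : ι → ℝ) : Prop :=
  ∃ L : List (ι → ℝ), (∀ z ∈ L, z ∈ A) ∧
    List.Chain (fun a b => (a, b) ∈ G.reactions) y (L ++ [y'])

end RN

variable {ι : Type}

/-- The complex consisting of the single species `j` (with unit coefficient),
for `j` in the given set. -/
def InterCplx [DecidableEq ι] (Y : Finset ι) (z : ι → ℝ) : Prop :=
  ∃ j ∈ Y, z = Pi.single j 1

/-- The complex `z` is supported off the set `Y`. -/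
def OffSet (Y : Finset ι) (z : ι → ℝ) : Prop := ∀ j ∈ Y, z j = 0

namespace RN

/-- `Y` is a set of intermediate species of `G`: (I1) every complex is either
supported off `Y` or equals a single species of `Y` with unit coefficient;
(I2) every `Y`-complex is connected to non-intermediate complexes by directed
reaction paths, in both directions, all of whose non-endpoints are
intermediates. -/
def IsIntermediateSet [DecidableEq ι] (G : RN ι) (Y : Finset ι) : Prop :=
  Y.Nonempty ∧ Y ⊆ G.species ∧
    (∀ y ∈ G.complexes, OffSet Y y ∨ InterCplx Y y) ∧
    (∀ j ∈ Y, ∃ y ∈ G.complexes, ∃ y' ∈ G.complexes, OffSet Y y ∧ OffSet Y y' ∧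
      G.PathThrough {z | InterCplx Y z} y (Pi.single j 1) ∧
      G.PathThrough {z | InterCplx Y z} (Pi.single j 1) y')

/-- `G'` is the reduction of `G` by removal of the set of intermediates `Y`:
its reactions are exactly the pairs `y → y'` of distinct non-intermediate
complexes of `G` joined by a directed reaction path all of whose non-endpoints
are intermediates (in particular all reactions of `G` between non-intermediate
complexes). -/
def IsIntermediateReduction [DecidableEq ι] (G : RN ι) (Y : Finset ι) (G' : RN ι) : Prop :=
  ∀ p : (ι → ℝ) × (ι → ℝ), p ∈ G'.reactions ↔
    (p.1 ∈ G.complexes ∧ p.2 ∈ G.complexes ∧ OffSet Y p.1 ∧ OffSet Y p.2 ∧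
      p.1 ≠ p.2 ∧ G.PathThrough {z | InterCplx Y z} p.1 p.2)

end RN

/-- The projection of a complex onto the coordinates outside `E` (the
coordinates in `E` are set to zero). -/
def projOff [DecidableEq ι] (E : Finset ι) (y : ι → ℝ) : ι → ℝ :=
  fun i => if i ∈ E then 0 else y i

namespace RN

/-- `E` is a set of catalysts of `G`, with `GE` the subnetwork of `G` implied
by `E`: (C1) every reaction either leaves the `E`-coordinates untouched or is
supported entirely in `E`; `GE` consists of the reactions of `G` involving
only species of `E`; and (C2) `GE` has no drainable and no self-replicable
siphons. -/
def IsCatalystSet (G GE : RN ι) (E : Finset ι) : Prop :=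
  E.Nonempty ∧ E ⊆ G.species ∧
    (∀ r ∈ G.reactions, (∀ i ∈ E, r.1 i = r.2 i) ∨ (∀ i, i ∉ E → r.1 i = 0 ∧ r.2 i = 0)) ∧
    (∀ p : (ι → ℝ) × (ι → ℝ), p ∈ GE.reactions ↔
      (p ∈ G.reactions ∧ (∀ i, p.1 i ≠ 0 → i ∈ E) ∧ (∀ i, p.2 i ≠ 0 → i ∈ E))) ∧
    (∀ T : Set ι, GE.IsSiphon T → ¬ GE.Drainable T ∧ ¬ GE.SelfReplicable T)

/-- `G'` is the reduction of `G` by removal of the set of catalysts `E`: its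
reactions are the projections off `E` of those reactions of `G` at least one
of whose projected sides is nonzero. -/
def IsCatalystReduction [DecidableEq ι] (G : RN ι) (E : Finset ι) (G' : RN ι) : Prop :=
  ∀ p : (ι → ℝ) × (ι → ℝ), p ∈ G'.reactions ↔
    ∃ r ∈ G.reactions, p = (projOff E r.1, projOff E r.2) ∧
      (projOff E r.1 ≠ 0 ∨ projOff E r.2 ≠ 0)

/-- A monomolecular network: every complex is either zero or a single species
with unit coefficient. -/
def Monomolecular [DecidableEq ι] (G : RN ι) : Prop :=
  ∀ y ∈ G.complexes, y = 0 ∨ ∃ i ∈ G.species, y = Pi.single i 1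

end RN


theorem farkasAux {ι α : Type} (s : Finset ι) (t : Finset α) (f : α → ι → ℝ) (b : ι → ℝ)
    (hb : ∀ i, b i ≠ 0 → i ∈ s) (hf : ∀ a ∈ t, ∀ i, f a i ≠ 0 → i ∈ s)
    (h : ¬ ∃ c : α → ℝ, (∀ a ∈ t, 0 ≤ c a) ∧ ∀ i, (∑ a ∈ t, c a * f a i) = b i) :
    ∃ y : ι → ℝ, (∀ a ∈ t, 0 ≤ ∑ i ∈ s, f a i * y i) ∧ ∑ i ∈ s, b i * y i < 0 := by
  classical
  induction t using Finset.induction_on generalizing f b with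
  | empty =>
    have hbne : ∃ i, b i ≠ 0 := by
      by_contra hc
      push_neg at hc
      exact h ⟨fun _ => 0, fun a ha => by simp at ha, fun i => by simp [hc i]⟩
    obtain ⟨i0, hi0⟩ := hbne
    refine ⟨fun i => -b i, fun a ha => by simp at ha, ?_⟩
    have h1 : (0:ℝ) < ∑ i ∈ s, b i * b i :=
      Finset.sum_pos' (fun i _ => mul_self_nonneg _) ⟨i0, hb i0 hi0, mul_self_pos.mpr hi0⟩
    have h2 : ∑ i ∈ s, b i * (-b i) = -∑ i ∈ s, b i * b i := by
      simp [mul_neg]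
    linarith
  | @insert a0 t ha0 ih =>
    by_cases hc : ∃ c : α → ℝ, (∀ a ∈ t, 0 ≤ c a) ∧ ∀ i, (∑ a ∈ t, c a * f a i) = b i
    · exfalso
      obtain ⟨c, hc0, hceq⟩ := hc
      refine h ⟨Function.update c a0 0, ?_, ?_⟩
      · intro a ha
        rcases Finset.mem_insert.mp ha with rfl | ha
        · simp
        · rw [Function.update_of_ne (fun hh : a = a0 => ha0 (hh ▸ ha))]
          exact hc0 a ha
      · intro i
        rw [Finset.sum_insert ha0, Function.update_self, zero_mul, zero_add, ← hceq i]
        exact Finset.sum_congr rfl fun a ha => by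
          rw [Function.update_of_ne (fun hh : a = a0 => ha0 (hh ▸ ha))]
    · obtain ⟨y, hy1, hy2⟩ := ih f b hb (fun a ha => hf a (Finset.mem_insert_of_mem ha)) hc
      by_cases hy0 : 0 ≤ ∑ i ∈ s, f a0 i * y i
      · refine ⟨y, fun a ha => ?_, hy2⟩
        rcases Finset.mem_insert.mp ha with rfl | ha
        · exact hy0
        · exact hy1 a ha
      · push_neg at hy0
        set d : ℝ := ∑ i ∈ s, f a0 i * y i with hd
        have hdne : d ≠ 0 := ne_of_lt hy0
        set D : (ι → ℝ) → ℝ := fun v => ∑ i ∈ s, v i * y i with hD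
        set g : (ι → ℝ) → (ι → ℝ) := fun v i => v i - (D v / d) * f a0 i with hg
        have hDfa0 : D (f a0) = d := by
          simp only [hD, hd]
        -- key dot computation : for any v and z, letting y' built from z,
        have hgsupp : ∀ v : ι → ℝ, (∀ i, v i ≠ 0 → i ∈ s) → ∀ i, g v i ≠ 0 → i ∈ s := by
          intro v hv i hi
          by_contra his
          have h1 : v i = 0 := by by_contra hh; exact his (hv i hh)
          have h2 : f a0 i = 0 := by
            by_contra hh; exact his (hf a0 (Finset.mem_insert_self a0 t) i hh)
          simp [hg, h1, h2] at hi
        have hgdot : ∀ (v z : ι → ℝ),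
            ∑ i ∈ s, g v i * z i
              = ∑ i ∈ s, v i * z i - (D v / d) * ∑ i ∈ s, f a0 i * z i := by
          intro v z
          simp only [hg, sub_mul, mul_assoc, Finset.sum_sub_distrib, Finset.mul_sum]
        have hnew : ¬ ∃ c : α → ℝ, (∀ a ∈ t, 0 ≤ c a) ∧
            ∀ i, (∑ a ∈ t, c a * g (f a) i) = g b i := by
          rintro ⟨c, hc0, hceq⟩
          set c0 : ℝ := (D b - ∑ a ∈ t, c a * D (f a)) / d with hc0def
          have hc0pos : 0 < c0 := by
            apply div_pos_of_neg_of_neg _ hy0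
            have hsum : 0 ≤ ∑ a ∈ t, c a * D (f a) :=
              Finset.sum_nonneg fun a ha => mul_nonneg (hc0 a ha) (hy1 a ha)
            have hDb : D b < 0 := hy2
            linarith
          refine h ⟨Function.update c a0 c0, ?_, ?_⟩
          · intro a ha
            rcases Finset.mem_insert.mp ha with rfl | ha
            · simp [le_of_lt hc0pos]
            · rw [Function.update_of_ne (fun hh : a = a0 => ha0 (hh ▸ ha))]
              exact hc0 a ha
          · intro i
            rw [Finset.sum_insert ha0, Function.update_self]
            have hrest : ∑ a ∈ t, Function.update c a0 c0 a * f a i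
                = ∑ a ∈ t, c a * f a i :=
              Finset.sum_congr rfl fun a ha => by
                rw [Function.update_of_ne (fun hh : a = a0 => ha0 (hh ▸ ha))]
            rw [hrest]
            have he := hceq i
            simp only [hg] at he
            -- he : ∑ a ∈ t, c a * (f a i - D (f a) / d * f a0 i) = b i - D b / d * f a0 i
            have he2 : ∑ a ∈ t, c a * f a i
                - (∑ a ∈ t, c a * D (f a)) * (f a0 i / d)
                = b i - D b / d * f a0 i := by
              rw [← he]
              rw [Finset.sum_mul]
              rw [← Finset.sum_sub_distrib]
              exact Finset.sum_congr rfl fun a ha => by ring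
            have : c0 * f a0 i = (D b - ∑ a ∈ t, c a * D (f a)) * (f a0 i / d) := by
              rw [hc0def]; field_simp
            rw [this]
            linear_combination he2
        obtain ⟨z, hz1, hz2⟩ := ih (fun a => g (f a)) (g b)
          (hgsupp b hb)
          (fun a ha => hgsupp (f a) (hf a (Finset.mem_insert_of_mem ha)))
          hnew
        set E : ℝ := ∑ i ∈ s, f a0 i * z i with hE
        have key : ∀ v : ι → ℝ,
            ∑ i ∈ s, v i * (z i - (E / d) * y i) = ∑ i ∈ s, g v i * z i := by
          intro v
          rw [hgdot v z]
          simp only [mul_sub, Finset.sum_sub_distrib]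
          have h1 : ∑ i ∈ s, v i * ((E / d) * y i) = (E / d) * ∑ i ∈ s, v i * y i := by
            rw [Finset.mul_sum]; exact Finset.sum_congr rfl fun i _ => by ring
          rw [h1, ← hE, hD]
          ring
        refine ⟨fun i => z i - (E / d) * y i, ?_, ?_⟩
        · intro a ha
          rcases Finset.mem_insert.mp ha with hEq | ha
          · rw [hEq, key (f a0)]
            have hz0 : ∀ i, g (f a0) i = 0 := by
              intro i; simp [hg, hDfa0, div_self hdne]
            rw [Finset.sum_congr rfl fun i _ => by rw [hz0 i, zero_mul]]
            simp
          · rw [key (f a)]; exact hz1 a ha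
        · rw [key b]; exact hz2


section Aux

variable {ι : Type}

/-- From a real feasible draining flux, get a draining list of reactions. -/
theorem listFromReal (H : RN ι) (T' : Finset ι) (c : ((ι → ℝ) × (ι → ℝ)) → ℝ)
    (hc : ∀ r ∈ H.reactions, 0 ≤ c r)
    (hneg : ∀ i ∈ T', ∑ r ∈ H.reactions, c r * (r.2 i - r.1 i) ≤ -1) :
    ∃ L : List ((ι → ℝ) × (ι → ℝ)), (∀ r ∈ L, r ∈ H.reactions) ∧
      ∀ i ∈ T', (L.map (fun r => r.2 i - r.1 i)).sum < 0 := by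
  classical
  set M : ℝ := ∑ i ∈ T', ∑ r ∈ H.reactions, |r.2 i - r.1 i| with hM
  have hM0 : 0 ≤ M :=
    Finset.sum_nonneg fun i _ => Finset.sum_nonneg fun r _ => abs_nonneg _
  obtain ⟨N, hN⟩ := exists_nat_gt M
  set n : ((ι → ℝ) × (ι → ℝ)) → ℕ := fun r => ⌈(N : ℝ) * c r⌉₊ with hn
  refine ⟨H.reactions.toList.flatMap (fun r => List.replicate (n r) r), ?_, ?_⟩
  · intro r hr
    rw [List.mem_flatMap] at hr
    obtain ⟨r', hr', hrr⟩ := hr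
    rw [List.eq_of_mem_replicate hrr]
    exact (Finset.mem_toList).mp hr'
  · intro i hi
    set g : ((ι → ℝ) × (ι → ℝ)) → ℝ := fun r => r.2 i - r.1 i with hgdef
    have hsum : ((H.reactions.toList.flatMap (fun r => List.replicate (n r) r)).map g).sum
        = ∑ r ∈ H.reactions, (n r : ℝ) * g r := by
      rw [List.flatMap_def, List.map_flatten, List.map_map]
      rw [List.sum_flatten, List.map_map]
      have : (List.map g ∘ fun r => List.replicate (n r) r)
          = fun r => List.replicate (n r) (g r) := by
        funext r; simp [List.map_replicate]
      rw [this]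
      have : (List.sum ∘ fun r => List.replicate (n r) (g r))
          = fun r => (n r : ℝ) * g r := by
        funext r; simp [List.sum_replicate, nsmul_eq_mul]
      rw [this, Finset.sum_map_toList]
    rw [hsum]
    have hbound : ∀ r ∈ H.reactions, (n r : ℝ) * g r
        ≤ (N : ℝ) * (c r * g r) + |g r| := by
      intro r hr
      have h1 : (N : ℝ) * c r ≤ (n r : ℝ) := Nat.le_ceil _
      have h2 : (n r : ℝ) < (N : ℝ) * c r + 1 :=
        Nat.ceil_lt_add_one (mul_nonneg (Nat.cast_nonneg N) (hc r hr))
      rcases le_or_gt 0 (g r) with hg | hg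
      · nlinarith [abs_of_nonneg hg]
      · nlinarith [abs_of_neg hg]
    calc ∑ r ∈ H.reactions, (n r : ℝ) * g r
        ≤ ∑ r ∈ H.reactions, ((N : ℝ) * (c r * g r) + |g r|) :=
          Finset.sum_le_sum hbound
      _ = (N : ℝ) * (∑ r ∈ H.reactions, c r * g r)
            + ∑ r ∈ H.reactions, |g r| := by
          rw [Finset.sum_add_distrib, Finset.mul_sum]
      _ ≤ (N : ℝ) * (-1) + M := by
          have h3 : ∑ r ∈ H.reactions, c r * g r ≤ -1 := hneg i hi
          have h4 : ∑ r ∈ H.reactions, |g r| ≤ M := by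
            rw [hM, hgdef]
            exact Finset.single_le_sum
              (f := fun j => ∑ r ∈ H.reactions, |r.2 j - r.1 j|)
              (fun j _ => Finset.sum_nonneg fun r _ => abs_nonneg _) hi
          have h5 : (0:ℝ) ≤ (N:ℝ) := Nat.cast_nonneg N
          nlinarith
      _ < 0 := by linarith

/-- A non-drainable subset of species admits a nonnegative dual certificate. -/
theorem notDrainableCert (H : RN ι) (T : Set ι) (hT : T.Nonempty)
    (hTs : T ⊆ ↑H.species) (hnd : ¬ H.Drainable T) :
    ∃ lam : ι → ℝ, (∀ i, 0 ≤ lam i) ∧ (∀ i, lam i ≠ 0 → i ∈ H.species ∧ i ∈ T) ∧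
      (∃ i, lam i ≠ 0) ∧
      ∀ r ∈ H.reactions, 0 ≤ ∑ i ∈ H.species, lam i * (r.2 i - r.1 i) := by
  classical
  set T' : Finset ι := H.species.filter (fun i => i ∈ T) with hT'
  have hmemT' : ∀ i, i ∈ T' ↔ i ∈ T := by
    intro i
    simp only [hT', Finset.mem_filter]
    exact ⟨fun h => h.2, fun h => ⟨hTs h, h⟩⟩
  set α := ((ι → ℝ) × (ι → ℝ)) ⊕ ι
  set t : Finset α := H.reactions.disjSum T' with ht
  set f : α → ι → ℝ := Sum.elim
    (fun r => fun i => if i ∈ T' then r.2 i - r.1 i else 0)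
    (fun j => Pi.single j 1) with hfdef
  set b : ι → ℝ := fun i => if i ∈ T' then (-1 : ℝ) else 0 with hbdef
  have hinfeas : ¬ ∃ c : α → ℝ, (∀ a ∈ t, 0 ≤ c a) ∧
      ∀ i, (∑ a ∈ t, c a * f a i) = b i := by
    rintro ⟨c, hcnn, hceq⟩
    have hkey : ∀ i ∈ T',
        ∑ r ∈ H.reactions, c (Sum.inl r) * (r.2 i - r.1 i) ≤ -1 := by
      intro i hi
      have he := hceq i
      rw [ht, Finset.sum_disjSum] at he
      have h1 : ∑ r ∈ H.reactions, c (Sum.inl r) * f (Sum.inl r) i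
          = ∑ r ∈ H.reactions, c (Sum.inl r) * (r.2 i - r.1 i) := by
        refine Finset.sum_congr rfl fun r _ => ?_
        simp [hfdef, hi]
      have h2 : ∑ j ∈ T', c (Sum.inr j) * f (Sum.inr j) i = c (Sum.inr i) := by
        rw [Finset.sum_eq_single i]
        · simp [hfdef]
        · intro j hj hji
          simp [hfdef, Pi.single_eq_of_ne' hji]
        · intro hii; exact absurd hi hii
      rw [h1, h2] at he
      have hb : b i = -1 := by simp [hbdef, hi]
      have hcnn2 : 0 ≤ c (Sum.inr i) :=
        hcnn (Sum.inr i) (by rw [ht]; exact Finset.inr_mem_disjSum.mpr hi)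
      rw [hb] at he
      linarith
    obtain ⟨L, hL1, hL2⟩ := listFromReal H T' (fun r => c (Sum.inl r))
      (fun r hr => hcnn (Sum.inl r) (by rw [ht]; exact Finset.inl_mem_disjSum.mpr hr))
      hkey
    exact hnd ⟨hT, hTs, L, hL1, fun i hi => hL2 i ((hmemT' i).mpr hi)⟩
  have hbsupp : ∀ i, b i ≠ 0 → i ∈ T' := by
    intro i hi
    by_contra hc
    simp [hbdef, hc] at hi
  have hfsupp : ∀ a ∈ t, ∀ i, f a i ≠ 0 → i ∈ T' := by
    intro a ha i hi
    rcases a with r | j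
    · by_contra hc
      simp [hfdef, hc] at hi
    · rw [ht, Finset.mem_disjSum] at ha
      rcases ha with ⟨j', hj', hjj⟩ | ⟨j', hj', hjj⟩
      · exact absurd hjj (by simp)
      · have : j' = j := by injection hjj
        subst this
        have : i = j' := by
          by_contra hne
          simp [hfdef, Pi.single_eq_of_ne hne] at hi
        subst this
        exact hj'
  obtain ⟨y, hy1, hy2⟩ := farkasAux T' t f b hbsupp hfsupp hinfeas
  set lam : ι → ℝ := fun i => if i ∈ T' then y i else 0 with hlam
  have hynn : ∀ i ∈ T', 0 ≤ y i := by
    intro i hi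
    have := hy1 (Sum.inr i) (by rw [ht]; exact Finset.inr_mem_disjSum.mpr hi)
    have h2 : ∑ j ∈ T', f (Sum.inr i) j * y j = y i := by
      rw [Finset.sum_eq_single i]
      · simp [hfdef]
      · intro j hj hji
        simp [hfdef, Pi.single_eq_of_ne hji]
      · intro hii; exact absurd hi hii
    rw [h2] at this
    exact this
  refine ⟨lam, ?_, ?_, ?_, ?_⟩
  · intro i
    by_cases hi : i ∈ T'
    · simp only [hlam, if_pos hi]; exact hynn i hi
    · simp [hlam, hi]
  · intro i hi
    by_cases hmem : i ∈ T'
    · exact ⟨(Finset.mem_filter.mp (hT' ▸ hmem)).1, (hmemT' i).mp hmem⟩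
    · simp [hlam, hmem] at hi
  · -- lam nonzero
    have hsum : ∑ i ∈ T', b i * y i = -∑ i ∈ T', y i := by
      rw [← Finset.sum_neg_distrib]
      refine Finset.sum_congr rfl fun i hi => by simp [hbdef, hi]
    rw [hsum] at hy2
    have hpos : 0 < ∑ i ∈ T', y i := by linarith
    by_contra hc
    push_neg at hc
    have : ∑ i ∈ T', y i = 0 := by
      refine Finset.sum_eq_zero fun i hi => ?_
      have := hc i
      simpa [hlam, if_pos hi] using this
    linarith
  · intro r hr
    have := hy1 (Sum.inl r) (by rw [ht]; exact Finset.inl_mem_disjSum.mpr hr)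
    have h1 : ∑ i ∈ T', f (Sum.inl r) i * y i
        = ∑ i ∈ T', lam i * (r.2 i - r.1 i) := by
      refine Finset.sum_congr rfl fun i hi => by simp [hfdef, hlam, hi]; ring
    rw [h1] at this
    have h2 : ∑ i ∈ H.species, lam i * (r.2 i - r.1 i)
        = ∑ i ∈ T', lam i * (r.2 i - r.1 i) := by
      refine (Finset.sum_subset (by rw [hT']; exact Finset.filter_subset _ _) ?_).symm
      intro i _ hni
      simp [hlam, hni]
    rw [h2]
    exact this

end Aux

section Aux2

variable {ι : Type}

/-- Descent lemma: if no siphon is drainable, then any nonnegative vector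
supported on the species whose dot with every reaction vector is nonpositive
must have zero dot with every reaction vector. -/
theorem lemD (H : RN ι) (hsi : ∀ T : Set ι, H.IsSiphon T → ¬ H.Drainable T) :
    ∀ n : ℕ, ∀ ν : ι → ℝ,
      (H.species.filter (fun i => ν i ≠ 0)).card ≤ n →
      (∀ i, 0 ≤ ν i) → (∀ i, ν i ≠ 0 → i ∈ H.species) →
      (∀ r ∈ H.reactions, ∑ i ∈ H.species, ν i * (r.2 i - r.1 i) ≤ 0) →
      ∀ r ∈ H.reactions, ∑ i ∈ H.species, ν i * (r.2 i - r.1 i) = 0 := by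
  classical
  intro n
  induction n with
  | zero =>
    intro ν hcard hnn hsupp hdot r hr
    have hempty : H.species.filter (fun i => ν i ≠ 0) = ∅ :=
      Finset.card_eq_zero.mp (Nat.le_zero.mp hcard)
    refine Finset.sum_eq_zero fun i hi => ?_
    have : ν i = 0 := by
      by_contra hc
      have : i ∈ H.species.filter (fun i => ν i ≠ 0) := Finset.mem_filter.mpr ⟨hi, hc⟩
      rw [hempty] at this; exact absurd this (Finset.notMem_empty i)
    rw [this, zero_mul]
  | succ n ih =>
    intro ν hcard hnn hsupp hdot
    by_cases hemp : H.species.filter (fun i => ν i ≠ 0) = ∅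
    · intro r hr
      refine Finset.sum_eq_zero fun i hi => ?_
      have : ν i = 0 := by
        by_contra hc
        have : i ∈ H.species.filter (fun i => ν i ≠ 0) := Finset.mem_filter.mpr ⟨hi, hc⟩
        rw [hemp] at this; exact absurd this (Finset.notMem_empty i)
      rw [this, zero_mul]
    · -- the support is a siphon
      set T : Set ι := {i | ν i ≠ 0} with hTdef
      obtain ⟨i0, hi0⟩ := Finset.nonempty_of_ne_empty hemp
      have hi0' := Finset.mem_filter.mp hi0
      have hTne : T.Nonempty := ⟨i0, hi0'.2⟩
      have hTsub : T ⊆ ↑H.species := fun i hi => hsupp i hi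
      have hsiphon : H.IsSiphon T := by
        refine ⟨hTne, hTsub, ?_⟩
        rintro r hr ⟨i, hiT, hi2⟩
        have hdotr := hdot r hr
        have hsplit : ∑ i ∈ H.species, ν i * r.2 i ≤ ∑ i ∈ H.species, ν i * r.1 i := by
          have : ∑ i ∈ H.species, ν i * (r.2 i - r.1 i)
              = ∑ i ∈ H.species, ν i * r.2 i - ∑ i ∈ H.species, ν i * r.1 i := by
            rw [← Finset.sum_sub_distrib]
            exact Finset.sum_congr rfl fun i _ => by ring
          linarith [this ▸ hdotr]
        have hr2nn : ∀ j, 0 ≤ r.2 j := H.complexes_nonneg r.2 (H.react_mem_snd r hr)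
        have hr1nn : ∀ j, 0 ≤ r.1 j := H.complexes_nonneg r.1 (H.react_mem_fst r hr)
        have hiS : i ∈ H.species := hsupp i hiT
        have hpos : 0 < ∑ j ∈ H.species, ν j * r.2 j := by
          have h1 : 0 < ν i * r.2 i :=
            mul_pos (lt_of_le_of_ne (hnn i) (Ne.symm hiT)) hi2
          have h2 : ν i * r.2 i ≤ ∑ j ∈ H.species, ν j * r.2 j :=
            Finset.single_le_sum (f := fun j => ν j * r.2 j)
              (fun j _ => mul_nonneg (hnn j) (hr2nn j)) hiS
          linarith
        have hpos1 : 0 < ∑ j ∈ H.species, ν j * r.1 j := lt_of_lt_of_le hpos hsplit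
        have : ∃ j ∈ H.species, 0 < ν j * r.1 j := by
          by_contra hcon
          push_neg at hcon
          have : ∑ j ∈ H.species, ν j * r.1 j ≤ 0 :=
            Finset.sum_nonpos fun j hj => hcon j hj
          linarith
        obtain ⟨j, hjS, hj⟩ := this
        have hνj : ν j ≠ 0 := by
          intro hc; rw [hc, zero_mul] at hj; exact lt_irrefl 0 hj
        have hr1j : 0 < r.1 j := by
          rcases lt_or_eq_of_le (hr1nn j) with h | h
          · exact h
          · rw [← h, mul_zero] at hj; exact absurd hj (lt_irrefl 0)
        exact ⟨j, hνj, hr1j⟩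
      obtain ⟨lam, hl1, hl2, hl3, hl4⟩ :=
        notDrainableCert H T hTne hTsub (hsi T hsiphon)
      -- choose the minimizer of ν i / lam i over the support of lam
      set T'' : Finset ι := H.species.filter (fun i => lam i ≠ 0) with hT''
      have hT''ne : T''.Nonempty := by
        obtain ⟨i, hi⟩ := hl3
        exact ⟨i, Finset.mem_filter.mpr ⟨(hl2 i hi).1, hi⟩⟩
      obtain ⟨i1, hi1, hmin⟩ := Finset.exists_min_image T'' (fun i => ν i / lam i) hT''ne
      have hi1' := Finset.mem_filter.mp hi1
      have hlami1 : 0 < lam i1 := lt_of_le_of_ne (hl1 i1) (Ne.symm hi1'.2)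
      have hνi1 : 0 < ν i1 :=
        lt_of_le_of_ne (hnn i1) (Ne.symm ((hl2 i1 hi1'.2).2))
      set ε : ℝ := ν i1 / lam i1 with hε
      have hεpos : 0 < ε := div_pos hνi1 hlami1
      set ν' : ι → ℝ := fun i => ν i - ε * lam i with hν'
      have hlam_supp : ∀ i, lam i ≠ 0 → i ∈ T'' := fun i hi =>
        Finset.mem_filter.mpr ⟨(hl2 i hi).1, hi⟩
      have hν'nn : ∀ i, 0 ≤ ν' i := by
        intro i
        by_cases hli : lam i = 0
        · simp [hν', hli, hnn i]
        · have hiT'' := hlam_supp i hli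
          have hlpos : 0 < lam i := lt_of_le_of_ne (hl1 i) (Ne.symm hli)
          have hm := hmin i hiT''
          have : ε * lam i ≤ ν i := by
            rw [hε]
            calc ν i1 / lam i1 * lam i ≤ (ν i / lam i) * lam i :=
                  mul_le_mul_of_nonneg_right hm (le_of_lt hlpos)
              _ = ν i := by field_simp
          simp only [hν']; linarith
      have hν'supp : ∀ i, ν' i ≠ 0 → i ∈ H.species := by
        intro i hi
        by_cases hνi : ν i = 0
        · by_cases hli : lam i = 0
          · exfalso; apply hi; simp [hν', hνi, hli]
          · exact (hl2 i hli).1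
        · exact hsupp i hνi
      have hν'zero : ∀ i, ν i = 0 → ν' i = 0 := by
        intro i hi
        have hli : lam i = 0 := by
          by_contra hc
          exact ((hl2 i hc).2 : ν i ≠ 0) hi
        simp [hν', hi, hli]
      have hν'i1 : ν' i1 = 0 := by
        simp only [hν', hε]
        field_simp
        ring
      have hcard' : (H.species.filter (fun i => ν' i ≠ 0)).card ≤ n := by
        have hsub : H.species.filter (fun i => ν' i ≠ 0)
            ⊆ (H.species.filter (fun i => ν i ≠ 0)).erase i1 := by
          intro i hi
          have hi' := Finset.mem_filter.mp hi
          refine Finset.mem_erase.mpr ⟨?_, Finset.mem_filter.mpr ⟨hi'.1, ?_⟩⟩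
          · intro hc; rw [hc] at hi'; exact hi'.2 hν'i1
          · intro hc; exact hi'.2 (hν'zero i hc)
        have hi1mem : i1 ∈ H.species.filter (fun i => ν i ≠ 0) :=
          Finset.mem_filter.mpr ⟨hi1'.1, ne_of_gt hνi1⟩
        calc (H.species.filter (fun i => ν' i ≠ 0)).card
            ≤ ((H.species.filter (fun i => ν i ≠ 0)).erase i1).card :=
              Finset.card_le_card hsub
          _ = (H.species.filter (fun i => ν i ≠ 0)).card - 1 :=
              Finset.card_erase_of_mem hi1mem
          _ ≤ n := by omega
      have hν'dot : ∀ r ∈ H.reactions,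
          ∑ i ∈ H.species, ν' i * (r.2 i - r.1 i) ≤ 0 := by
        intro r hr
        have hsplit : ∑ i ∈ H.species, ν' i * (r.2 i - r.1 i)
            = ∑ i ∈ H.species, ν i * (r.2 i - r.1 i)
              - ε * ∑ i ∈ H.species, lam i * (r.2 i - r.1 i) := by
          rw [Finset.mul_sum, ← Finset.sum_sub_distrib]
          exact Finset.sum_congr rfl fun i _ => by simp only [hν']; ring
        rw [hsplit]
        have h1 := hdot r hr
        have h2 := hl4 r hr
        nlinarith
      have hres := ih ν' hcard' hν'nn hν'supp hν'dot
      intro r hr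
      have hsplit : ∑ i ∈ H.species, ν' i * (r.2 i - r.1 i)
          = ∑ i ∈ H.species, ν i * (r.2 i - r.1 i)
            - ε * ∑ i ∈ H.species, lam i * (r.2 i - r.1 i) := by
        rw [Finset.mul_sum, ← Finset.sum_sub_distrib]
        exact Finset.sum_congr rfl fun i _ => by simp only [hν']; ring
      have h1 := hres r hr
      have h2 := hl4 r hr
      have h3 := hdot r hr
      rw [hsplit] at h1
      nlinarith

/-- A conservative network with no drainable siphons is consistent. -/
theorem consistent_of_conservative (H : RN ι)
    (hcons : H.Conservative)
    (hsi : ∀ T : Set ι, H.IsSiphon T → ¬ H.Drainable T) :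
    H.Consistent := by
  classical
  obtain ⟨ω, hω1, hω2⟩ := hcons
  set b : ι → ℝ := fun i => -∑ r ∈ H.reactions, (r.2 i - r.1 i) with hb
  have hΔsupp : ∀ r ∈ H.reactions, ∀ i, (r.2 i - r.1 i) ≠ 0 → i ∈ H.species := by
    intro r hr i hi
    by_cases h1 : r.1 i = 0
    · have h2 : r.2 i ≠ 0 := fun hc => hi (by rw [hc, h1, sub_zero])
      exact H.complexes_supp r.2 (H.react_mem_snd r hr) i h2
    · exact H.complexes_supp r.1 (H.react_mem_fst r hr) i h1
  have hbsupp : ∀ i, b i ≠ 0 → i ∈ H.species := by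
    intro i hi
    rw [hb] at hi
    simp only [neg_ne_zero] at hi
    obtain ⟨r, hr, hri⟩ := Finset.exists_ne_zero_of_sum_ne_zero hi
    exact hΔsupp r hr i hri
  by_cases hfeas : ∃ c : ((ι → ℝ) × (ι → ℝ)) → ℝ, (∀ r ∈ H.reactions, 0 ≤ c r) ∧
      ∀ i, (∑ r ∈ H.reactions, c r * (r.2 i - r.1 i)) = b i
  · obtain ⟨c, hc1, hc2⟩ := hfeas
    refine ⟨fun r => c r + 1, fun r hr => by
      show (0:ℝ) < c r + 1
      linarith [hc1 r hr], fun i => ?_⟩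
    have := hc2 i
    rw [hb] at this
    have hexp : ∑ r ∈ H.reactions, (c r + 1) * (r.2 i - r.1 i)
        = ∑ r ∈ H.reactions, c r * (r.2 i - r.1 i)
          + ∑ r ∈ H.reactions, (r.2 i - r.1 i) := by
      rw [← Finset.sum_add_distrib]
      exact Finset.sum_congr rfl fun r _ => by ring
    rw [hexp, this]
    ring
  · obtain ⟨y, hy1, hy2⟩ := farkasAux H.species H.reactions
      (fun r => fun i => r.2 i - r.1 i) b hbsupp hΔsupp hfeas
    -- from hy2 : ∑ i ∈ species, b i * y i < 0 get a reaction with positive dot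
    have hswap : ∑ i ∈ H.species, b i * y i
        = -∑ r ∈ H.reactions, ∑ i ∈ H.species, (r.2 i - r.1 i) * y i := by
      have h1 : ∀ i, b i * y i = -∑ r ∈ H.reactions, (r.2 i - r.1 i) * y i := by
        intro i; rw [hb]; dsimp only; rw [neg_mul, Finset.sum_mul]
      calc ∑ i ∈ H.species, b i * y i
          = ∑ i ∈ H.species, -∑ r ∈ H.reactions, (r.2 i - r.1 i) * y i :=
            Finset.sum_congr rfl fun i _ => h1 i
        _ = -∑ i ∈ H.species, ∑ r ∈ H.reactions, (r.2 i - r.1 i) * y i := by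
            rw [Finset.sum_neg_distrib]
        _ = -∑ r ∈ H.reactions, ∑ i ∈ H.species, (r.2 i - r.1 i) * y i := by
            rw [Finset.sum_comm]
    rw [hswap] at hy2
    have hpos : 0 < ∑ r ∈ H.reactions, ∑ i ∈ H.species, (r.2 i - r.1 i) * y i := by
      linarith
    obtain ⟨r0, hr0, hr0pos⟩ : ∃ r ∈ H.reactions,
        0 < ∑ i ∈ H.species, (r.2 i - r.1 i) * y i := by
      by_contra hcon
      push_neg at hcon
      have : ∑ r ∈ H.reactions, ∑ i ∈ H.species, (r.2 i - r.1 i) * y i ≤ 0 :=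
        Finset.sum_nonpos fun r hr => hcon r hr
      linarith
    have hSne : H.species.Nonempty := by
      rcases Finset.eq_empty_or_nonempty H.species with h | h
      · rw [h] at hr0pos; simp at hr0pos
      · exact h
    obtain ⟨i0, hi0S, hmax⟩ := Finset.exists_max_image H.species (fun i => y i / ω i) hSne
    set tm : ℝ := y i0 / ω i0 with htm
    set ν : ι → ℝ := fun i => if i ∈ H.species then tm * ω i - y i else 0 with hν
    have hνnn : ∀ i, 0 ≤ ν i := by
      intro i
      by_cases hi : i ∈ H.species
      · have hωi : 0 < ω i := hω1 i hi
        have := hmax i hi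
        have : y i ≤ tm * ω i := by
          calc y i = (y i / ω i) * ω i := by field_simp
            _ ≤ tm * ω i := mul_le_mul_of_nonneg_right this (le_of_lt hωi)
        simp only [hν, if_pos hi]; linarith
      · simp [hν, hi]
    have hνsupp : ∀ i, ν i ≠ 0 → i ∈ H.species := by
      intro i hi
      by_contra hc
      simp [hν, hc] at hi
    have hνdot : ∀ r ∈ H.reactions,
        ∑ i ∈ H.species, ν i * (r.2 i - r.1 i)
          = -∑ i ∈ H.species, (r.2 i - r.1 i) * y i := by
      intro r hr
      have : ∑ i ∈ H.species, ν i * (r.2 i - r.1 i)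
          = tm * ∑ i ∈ H.species, ω i * (r.2 i - r.1 i)
            - ∑ i ∈ H.species, (r.2 i - r.1 i) * y i := by
        rw [Finset.mul_sum, ← Finset.sum_sub_distrib]
        refine Finset.sum_congr rfl fun i hi => ?_
        simp only [hν, if_pos hi]; ring
      rw [this, hω2 r hr]; ring
    have hνle : ∀ r ∈ H.reactions,
        ∑ i ∈ H.species, ν i * (r.2 i - r.1 i) ≤ 0 := by
      intro r hr
      rw [hνdot r hr]
      have := hy1 r hr
      linarith
    have := lemD H hsi (H.species.filter (fun i => ν i ≠ 0)).card ν
      (le_refl _) hνnn hνsupp hνle r0 hr0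
    rw [hνdot r0 hr0] at this
    linarith

end Aux2


/-- Theorem 2(iii): if `G'` is obtained from `G` by removal of a set of
catalysts `E` (with implied subnetwork `GE`), then consistency of `G` implies
consistency of `G'`; conversely, if `G'` is consistent and `GE` is
conservative, then `G` is consistent. -/
theorem consistent_removal_of_catalysts
    {ι : Type} [DecidableEq ι] (G G' GE : RN ι) (E : Finset ι)
    (hcat : G.IsCatalystSet GE E) (hred : G.IsCatalystReduction E G') :
    (G.Consistent → G'.Consistent) ∧
    (G'.Consistent → GE.Conservative → G.Consistent) := by
  classical
  obtain ⟨hEne, hEsub, hC1, hGEr, hC2⟩ := hcat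
  set fproj : ((ι → ℝ) × (ι → ℝ)) → ((ι → ℝ) × (ι → ℝ)) :=
    fun r => (projOff E r.1, projOff E r.2) with hfproj
  set K : Finset ((ι → ℝ) × (ι → ℝ)) :=
    G.reactions.filter (fun r => ¬ (projOff E r.1 = 0 ∧ projOff E r.2 = 0)) with hK
  have hprojval : ∀ (z : ι → ℝ) (i : ι), i ∉ E → projOff E z i = z i := by
    intro z i hi; simp [projOff, hi]
  have hprojzero : ∀ (z : ι → ℝ), projOff E z = 0 ↔ (∀ i, z i ≠ 0 → i ∈ E) := by
    intro z
    constructor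
    · intro h i hi
      by_contra hc
      have := congrFun h i
      rw [hprojval z i hc] at this
      exact hi this
    · intro h
      funext i
      by_cases hi : i ∈ E
      · simp [projOff, hi]
      · simp only [projOff, if_neg hi]
        by_contra hc
        exact hi (h i hc)
  have hDropIff : ∀ r ∈ G.reactions,
      ((projOff E r.1 = 0 ∧ projOff E r.2 = 0) ↔ r ∈ GE.reactions) := by
    intro r hr
    rw [hGEr r]
    constructor
    · rintro ⟨h1, h2⟩
      exact ⟨hr, (hprojzero r.1).mp h1, (hprojzero r.2).mp h2⟩
    · rintro ⟨_, h1, h2⟩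
      exact ⟨(hprojzero r.1).mpr h1, (hprojzero r.2).mpr h2⟩
  have hKmem : ∀ r, r ∈ K ↔ r ∈ G.reactions ∧ ¬ (projOff E r.1 = 0 ∧ projOff E r.2 = 0) := by
    intro r; rw [hK, Finset.mem_filter]
  have hKeptE : ∀ r ∈ K, ∀ i ∈ E, r.1 i = r.2 i := by
    intro r hr i hi
    obtain ⟨hrG, hrnz⟩ := (hKmem r).mp hr
    rcases hC1 r hrG with h | h
    · exact h i hi
    · exfalso
      exact hrnz ⟨(hprojzero r.1).mpr (fun j hj => by
          by_contra hc; exact hj (h j hc).1),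
        (hprojzero r.2).mpr (fun j hj => by
          by_contra hc; exact hj (h j hc).2)⟩
  have hfib : ∀ r ∈ K, fproj r ∈ G'.reactions := by
    intro r hr
    obtain ⟨hrG, hrnz⟩ := (hKmem r).mp hr
    exact (hred (fproj r)).mpr ⟨r, hrG, rfl, not_and_or.mp hrnz⟩
  constructor
  · -- G consistent → G' consistent
    rintro ⟨v, hv1, hv2⟩
    refine ⟨fun p => ∑ r ∈ K.filter (fun r => fproj r = p), v r, ?_, ?_⟩
    · intro p hp
      obtain ⟨r, hrG, hpeq, hnz⟩ := (hred p).mp hp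
      have hrK : r ∈ K := (hKmem r).mpr ⟨hrG, fun hc => by
        rcases hnz with h | h
        · exact h hc.1
        · exact h hc.2⟩
      refine Finset.sum_pos (fun r' hr' => ?_) ⟨r, Finset.mem_filter.mpr ⟨hrK, by rw [hpeq]⟩⟩
      have := (hKmem r').mp (Finset.mem_filter.mp hr').1
      exact hv1 r' this.1
    · intro i
      have step1 : ∑ p ∈ G'.reactions,
          (∑ r ∈ K.filter (fun r => fproj r = p), v r) * (p.2 i - p.1 i)
          = ∑ r ∈ K, v r * ((fproj r).2 i - (fproj r).1 i) := by
        rw [← Finset.sum_fiberwise_of_maps_to hfib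
          (fun r => v r * ((fproj r).2 i - (fproj r).1 i))]
        refine Finset.sum_congr rfl fun p _ => ?_
        rw [Finset.sum_mul]
        refine Finset.sum_congr rfl fun r hr => ?_
        rw [(Finset.mem_filter.mp hr).2]
      rw [step1]
      by_cases hi : i ∈ E
      · refine Finset.sum_eq_zero fun r _ => ?_
        have h1 : (fproj r).1 i = 0 := by simp [hfproj, projOff, hi]
        have h2 : (fproj r).2 i = 0 := by simp [hfproj, projOff, hi]
        rw [h1, h2]; ring
      · have step2 : ∑ r ∈ K, v r * ((fproj r).2 i - (fproj r).1 i)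
            = ∑ r ∈ K, v r * (r.2 i - r.1 i) := by
          refine Finset.sum_congr rfl fun r _ => ?_
          rw [show (fproj r).2 i = r.2 i from hprojval r.2 i hi,
            show (fproj r).1 i = r.1 i from hprojval r.1 i hi]
        rw [step2]
        have hsplit := Finset.sum_filter_add_sum_filter_not G.reactions
          (fun r => ¬ (projOff E r.1 = 0 ∧ projOff E r.2 = 0))
          (fun r => v r * (r.2 i - r.1 i))
        have hzero : ∑ r ∈ G.reactions.filter
            (fun r => ¬¬ (projOff E r.1 = 0 ∧ projOff E r.2 = 0)),
            v r * (r.2 i - r.1 i) = 0 := by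
          refine Finset.sum_eq_zero fun r hr => ?_
          obtain ⟨hrG, hrz⟩ := Finset.mem_filter.mp hr
          rw [not_not] at hrz
          have h1 : r.1 i = 0 := by
            have := congrFun hrz.1 i; rwa [hprojval r.1 i hi] at this
          have h2 : r.2 i = 0 := by
            have := congrFun hrz.2 i; rwa [hprojval r.2 i hi] at this
          rw [h1, h2]; ring
        rw [← hK] at hsplit
        rw [hzero] at hsplit
        rw [add_zero] at hsplit
        rw [hsplit]
        exact hv2 i
  · -- G' consistent and GE conservative → G consistent
    rintro ⟨v', hv'1, hv'2⟩ hGEcons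
    have hGEcon : GE.Consistent :=
      consistent_of_conservative GE hGEcons (fun T hT => (hC2 T hT).1)
    obtain ⟨vE, hvE1, hvE2⟩ := hGEcon
    set v : ((ι → ℝ) × (ι → ℝ)) → ℝ := fun r =>
      if r ∈ GE.reactions then vE r
      else v' (fproj r) / ((K.filter (fun r' => fproj r' = fproj r)).card : ℝ) with hv
    have hvGE : ∀ r ∈ GE.reactions, v r = vE r := by
      intro r hr; simp only [hv, if_pos hr]
    have hvK : ∀ r, r ∉ GE.reactions →
        v r = v' (fproj r) / ((K.filter (fun r' => fproj r' = fproj r)).card : ℝ) := by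
      intro r hr; simp only [hv, if_neg hr]
    have hKiff : ∀ r ∈ G.reactions, (r ∈ K ↔ r ∉ GE.reactions) := by
      intro r hr
      rw [hKmem r]
      constructor
      · rintro ⟨_, h⟩ hc
        exact h ((hDropIff r hr).mpr hc)
      · intro h
        exact ⟨hr, fun hc => h ((hDropIff r hr).mp hc)⟩
    have hfibne : ∀ r ∈ K, r ∈ K.filter (fun r' => fproj r' = fproj r) :=
      fun r hr => Finset.mem_filter.mpr ⟨hr, rfl⟩
    refine ⟨v, ?_, ?_⟩
    · intro r hr
      by_cases hrGE : r ∈ GE.reactions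
      · rw [hvGE r hrGE]
        exact hvE1 r hrGE
      · have hrK : r ∈ K := (hKiff r hr).mpr hrGE
        rw [hvK r hrGE]
        refine div_pos (hv'1 _ (hfib r hrK)) ?_
        have : 0 < (K.filter (fun r' => fproj r' = fproj r)).card :=
          Finset.card_pos.mpr ⟨r, hfibne r hrK⟩
        exact_mod_cast this
    · intro i
      have hsplit := Finset.sum_filter_add_sum_filter_not G.reactions
        (fun r => r ∈ GE.reactions) (fun r => v r * (r.2 i - r.1 i))
      have hfilter1 : G.reactions.filter (fun r => r ∈ GE.reactions) = GE.reactions := by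
        ext r
        rw [Finset.mem_filter]
        exact ⟨fun h => h.2, fun h => ⟨((hGEr r).mp h).1, h⟩⟩
      have hfilter2 : G.reactions.filter (fun r => r ∉ GE.reactions) = K := by
        ext r
        rw [Finset.mem_filter]
        constructor
        · rintro ⟨hrG, h⟩; exact (hKiff r hrG).mpr h
        · intro h
          have hrG := ((hKmem r).mp h).1
          exact ⟨hrG, (hKiff r hrG).mp h⟩
      rw [hfilter1, hfilter2] at hsplit
      have hpart1 : ∑ r ∈ GE.reactions, v r * (r.2 i - r.1 i) = 0 := by
        rw [Finset.sum_congr rfl (fun r hr => by rw [hvGE r hr])]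
        exact hvE2 i
      have hpart2 : ∑ r ∈ K, v r * (r.2 i - r.1 i) = 0 := by
        by_cases hi : i ∈ E
        · refine Finset.sum_eq_zero fun r hr => ?_
          rw [hKeptE r hr i hi]; ring
        · have hval : ∀ r ∈ K, v r * (r.2 i - r.1 i)
              = v' (fproj r) / ((K.filter (fun r' => fproj r' = fproj r)).card : ℝ)
                * ((fproj r).2 i - (fproj r).1 i) := by
            intro r hr
            have hrG := ((hKmem r).mp hr).1
            have hrGE : r ∉ GE.reactions := (hKiff r hrG).mp hr
            rw [hvK r hrGE]
            rw [show (fproj r).2 i = r.2 i from hprojval r.2 i hi,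
              show (fproj r).1 i = r.1 i from hprojval r.1 i hi]
          rw [Finset.sum_congr rfl hval]
          rw [← Finset.sum_fiberwise_of_maps_to hfib
            (fun r => v' (fproj r) / ((K.filter (fun r' => fproj r' = fproj r)).card : ℝ)
              * ((fproj r).2 i - (fproj r).1 i))]
          rw [← hv'2 i]
          refine Finset.sum_congr rfl fun p hp => ?_
          obtain ⟨rw0, hrw0G, hpeq, hnz⟩ := (hred p).mp hp
          have hrw0K : rw0 ∈ K := (hKmem rw0).mpr ⟨hrw0G, fun hc => by
            rcases hnz with h | h
            · exact h hc.1
            · exact h hc.2⟩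
          have hcardpos : 0 < (K.filter (fun r' => fproj r' = p)).card :=
            Finset.card_pos.mpr ⟨rw0, Finset.mem_filter.mpr ⟨hrw0K, by rw [hpeq]⟩⟩
          have hinner : ∀ r ∈ K.filter (fun r' => fproj r' = p),
              v' (fproj r) / ((K.filter (fun r' => fproj r' = fproj r)).card : ℝ)
                * ((fproj r).2 i - (fproj r).1 i)
              = v' p / ((K.filter (fun r' => fproj r' = p)).card : ℝ) * (p.2 i - p.1 i) := by
            intro r hr
            rw [(Finset.mem_filter.mp hr).2]
          rw [Finset.sum_congr rfl hinner, Finset.sum_const, nsmul_eq_mul]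
          have hcne : ((K.filter (fun r' => fproj r' = p)).card : ℝ) ≠ 0 := by
            exact_mod_cast Nat.pos_iff_ne_zero.mp hcardpos
          field_simp
      rw [hpart1, hpart2] at hsplit
      rw [← hsplit]
      ring
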